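/- Assume ker R ∩ ker S ∩ N = {0} and that there is a choice τ ↦ h^τ of normalized maximizers that is differentiable on (0,1) with Q̃ h^τ ≠ 0 for all τ. Then the function H(τ) = 1/λ(τ) is differentiable on (0,1) with H'(τ) = (‖S h^τ‖² − ‖R h^τ‖²)/‖Q̃ h^τ‖². Consequently, if τ^y ∈ (0,1) minimizes τ ↦ ‖Q̃ h^τ‖² over (0,1), then ‖R f^{τ^y}‖² + ‖R h^{τ^y}‖² = 1 and ‖S f^{τ^y}‖² + ‖S h^{τ^y}‖² = 1. -/

import Mathlib

/-- The function `H(τ) = 1/λ(τ)` is differentiable on `(0,1)` with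
derivative `H'(τ) = (‖S h^τ‖² − ‖R h^τ‖²)/‖Q̃ h^τ‖²`; consequently, at a minimizer
`τ^y` of `τ ↦ ‖Q̃ h^τ‖²` one has `‖R f^{τ^y}‖² + ‖R h^{τ^y}‖² = 1` and
`‖S f^{τ^y}‖² + ‖S h^{τ^y}‖² = 1`. -/
theorem statement15
    {F GR GS Z : Type*}
    [NormedAddCommGroup F] [InnerProductSpace ℝ F] [FiniteDimensional ℝ F]
    [NormedAddCommGroup GR] [InnerProductSpace ℝ GR] [FiniteDimensional ℝ GR]
    [NormedAddCommGroup GS] [InnerProductSpace ℝ GS] [FiniteDimensional ℝ GS]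
    [NormedAddCommGroup Z] [InnerProductSpace ℝ Z] [FiniteDimensional ℝ Z]
    {m : ℕ}
    (R : F →ₗ[ℝ] GR) (S : F →ₗ[ℝ] GS) (Qt : F →ₗ[ℝ] Z) (Λ : F →ₗ[ℝ] (Fin m → ℝ))
    (hker : LinearMap.ker R ⊓ LinearMap.ker S ⊓ LinearMap.ker Λ = ⊥)
    (y : Fin m → ℝ) (hy : ∃ f : F, Λ f = y)
    -- constrained regularizers
    (fτ : ℝ → F)
    (hfτ : ∀ σ ∈ Set.Ioo (0 : ℝ) 1, Λ (fτ σ) = y ∧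
      ∀ g : F, Λ g = y →
        (1 - σ) * ‖R (fτ σ)‖ ^ 2 + σ * ‖S (fτ σ)‖ ^ 2 ≤
          (1 - σ) * ‖R g‖ ^ 2 + σ * ‖S g‖ ^ 2)
    -- `lam σ = λ(σ)` with a differentiable selection `hfun σ` of normalized maximizers
    (lam : ℝ → ℝ) (hfun : ℝ → F)
    (hmem : ∀ σ ∈ Set.Ioo (0 : ℝ) 1, hfun σ ∈ LinearMap.ker Λ)
    (hub : ∀ σ ∈ Set.Ioo (0 : ℝ) 1, ∀ g ∈ LinearMap.ker Λ,
      ‖Qt g‖ ^ 2 ≤ lam σ * ((1 - σ) * ‖R g‖ ^ 2 + σ * ‖S g‖ ^ 2))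
    (hattain : ∀ σ ∈ Set.Ioo (0 : ℝ) 1,
      ‖Qt (hfun σ)‖ ^ 2 = lam σ * ((1 - σ) * ‖R (hfun σ)‖ ^ 2 + σ * ‖S (hfun σ)‖ ^ 2))
    (hnorm : ∀ σ ∈ Set.Ioo (0 : ℝ) 1,
      (1 - σ) * ‖R (hfun σ)‖ ^ 2 + σ * ‖S (hfun σ)‖ ^ 2 =
        1 - ((1 - σ) * ‖R (fτ σ)‖ ^ 2 + σ * ‖S (fτ σ)‖ ^ 2))
    (hdiff : ∀ σ ∈ Set.Ioo (0 : ℝ) 1, DifferentiableAt ℝ hfun σ)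
    (hQne : ∀ σ ∈ Set.Ioo (0 : ℝ) 1, Qt (hfun σ) ≠ 0) :
    (∀ τ ∈ Set.Ioo (0 : ℝ) 1,
      HasDerivAt (fun σ => 1 / lam σ)
        ((‖S (hfun τ)‖ ^ 2 - ‖R (hfun τ)‖ ^ 2) / ‖Qt (hfun τ)‖ ^ 2) τ) ∧
    ∀ τy ∈ Set.Ioo (0 : ℝ) 1,
      (∀ σ ∈ Set.Ioo (0 : ℝ) 1, ‖Qt (hfun τy)‖ ^ 2 ≤ ‖Qt (hfun σ)‖ ^ 2) →
      ‖R (fτ τy)‖ ^ 2 + ‖R (hfun τy)‖ ^ 2 = 1 ∧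
        ‖S (fτ τy)‖ ^ 2 + ‖S (hfun τy)‖ ^ 2 = 1 := by
  classical
  -- positivity of `‖Qt h^σ‖²`
  have hq_pos : ∀ σ ∈ Set.Ioo (0 : ℝ) 1, 0 < ‖Qt (hfun σ)‖ ^ 2 := by
    intro σ hσ
    exact pow_pos (norm_pos_iff.mpr (hQne σ hσ)) 2
  -- positivity of the energy
  have hE_pos : ∀ σ ∈ Set.Ioo (0 : ℝ) 1,
      0 < (1 - σ) * ‖R (hfun σ)‖ ^ 2 + σ * ‖S (hfun σ)‖ ^ 2 := by
    intro σ hσ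
    have h1 : 0 ≤ (1 - σ) * ‖R (hfun σ)‖ ^ 2 + σ * ‖S (hfun σ)‖ ^ 2 := by
      nlinarith [sq_nonneg ‖R (hfun σ)‖, sq_nonneg ‖S (hfun σ)‖, hσ.1, hσ.2]
    rcases h1.lt_or_eq with h | h
    · exact h
    · exfalso
      have := hattain σ hσ
      rw [← h] at this
      simp at this
      exact hQne σ hσ this
  -- positivity of `lam`
  have hlam_pos : ∀ σ ∈ Set.Ioo (0 : ℝ) 1, 0 < lam σ := by
    intro σ hσ
    have h1 := hattain σ hσ
    have h2 := hq_pos σ hσ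
    rw [h1] at h2
    rcases mul_pos_iff.mp h2 with ⟨h, _⟩ | ⟨_, h⟩
    · exact h
    · exact absurd (hE_pos σ hσ) (not_lt.mpr h.le)
  -- the basic identity `1/lam σ = E σ / qh σ`
  have hinv : ∀ σ ∈ Set.Ioo (0 : ℝ) 1,
      1 / lam σ = ((1 - σ) * ‖R (hfun σ)‖ ^ 2 + σ * ‖S (hfun σ)‖ ^ 2) / ‖Qt (hfun σ)‖ ^ 2 := by
    intro σ hσ
    rw [div_eq_div_iff (hlam_pos σ hσ).ne' (hq_pos σ hσ).ne']
    linear_combination hattain σ hσ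
  -- differentiability of the building blocks
  have hdR : ∀ τ ∈ Set.Ioo (0 : ℝ) 1, DifferentiableAt ℝ (fun σ => ‖R (hfun σ)‖ ^ 2) τ := by
    intro τ hτ
    have h1 : DifferentiableAt ℝ (fun σ => R (hfun σ)) τ :=
      ((LinearMap.toContinuousLinearMap R).differentiableAt).comp τ (hdiff τ hτ)
    exact h1.norm_sq (𝕜 := ℝ)
  have hdS : ∀ τ ∈ Set.Ioo (0 : ℝ) 1, DifferentiableAt ℝ (fun σ => ‖S (hfun σ)‖ ^ 2) τ := by
    intro τ hτ
    have h1 : DifferentiableAt ℝ (fun σ => S (hfun σ)) τ :=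
      ((LinearMap.toContinuousLinearMap S).differentiableAt).comp τ (hdiff τ hτ)
    exact h1.norm_sq (𝕜 := ℝ)
  have hdQ : ∀ τ ∈ Set.Ioo (0 : ℝ) 1, DifferentiableAt ℝ (fun σ => ‖Qt (hfun σ)‖ ^ 2) τ := by
    intro τ hτ
    have h1 : DifferentiableAt ℝ (fun σ => Qt (hfun σ)) τ :=
      ((LinearMap.toContinuousLinearMap Qt).differentiableAt).comp τ (hdiff τ hτ)
    exact h1.norm_sq (𝕜 := ℝ)
  -- Part 1
  have main : ∀ τ ∈ Set.Ioo (0 : ℝ) 1,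
      HasDerivAt (fun σ => 1 / lam σ)
        ((‖S (hfun τ)‖ ^ 2 - ‖R (hfun τ)‖ ^ 2) / ‖Qt (hfun τ)‖ ^ 2) τ := by
    intro τ hτ
    set φ : ℝ → ℝ :=
      fun σ => ((1 - σ) * ‖R (hfun σ)‖ ^ 2 + σ * ‖S (hfun σ)‖ ^ 2) / ‖Qt (hfun σ)‖ ^ 2
      with hφ_def
    have hφdiff : DifferentiableAt ℝ φ τ := by
      apply DifferentiableAt.div
      · exact (((differentiableAt_const (1:ℝ)).sub differentiableAt_id).mul (hdR τ hτ)).add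
          (differentiableAt_id.mul (hdS τ hτ))
      · exact hdQ τ hτ
      · exact (hq_pos τ hτ).ne'
    have hφder : HasDerivAt φ (deriv φ τ) τ := hφdiff.hasDerivAt
    -- the touching affine function
    set ψ : ℝ → ℝ :=
      fun σ => ((1 - σ) * ‖R (hfun τ)‖ ^ 2 + σ * ‖S (hfun τ)‖ ^ 2) / ‖Qt (hfun τ)‖ ^ 2
      with hψ_def
    have hψder : HasDerivAt ψ
        ((‖S (hfun τ)‖ ^ 2 - ‖R (hfun τ)‖ ^ 2) / ‖Qt (hfun τ)‖ ^ 2) τ := by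
      have h1 : HasDerivAt (fun σ : ℝ => (1 - σ) * ‖R (hfun τ)‖ ^ 2 + σ * ‖S (hfun τ)‖ ^ 2)
          (‖S (hfun τ)‖ ^ 2 - ‖R (hfun τ)‖ ^ 2) τ := by
        have h2 := (((hasDerivAt_id τ).const_sub 1).mul_const (‖R (hfun τ)‖ ^ 2)).add
          ((hasDerivAt_id τ).mul_const (‖S (hfun τ)‖ ^ 2))
        refine h2.congr_deriv ?_
        ring
      exact h1.div_const _
    -- `1/lam ≤ ψ` on `Ioo 0 1`
    have hle : ∀ σ ∈ Set.Ioo (0 : ℝ) 1, 1 / lam σ ≤ ψ σ := by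
      intro σ hσ
      have h := hub σ hσ (hfun τ) (hmem τ hτ)
      rw [hψ_def]
      simp only
      rw [div_le_div_iff₀ (hlam_pos σ hσ) (hq_pos τ hτ), one_mul, mul_comm]
      exact h
    have hmemIoo : Set.Ioo (0 : ℝ) 1 ∈ nhds τ := isOpen_Ioo.mem_nhds hτ
    have heq : (fun σ => 1 / lam σ) =ᶠ[nhds τ] φ := by
      filter_upwards [hmemIoo] with σ hσ
      exact hinv σ hσ
    have hg : HasDerivAt (fun σ => ψ σ - φ σ)
        ((‖S (hfun τ)‖ ^ 2 - ‖R (hfun τ)‖ ^ 2) / ‖Qt (hfun τ)‖ ^ 2 - deriv φ τ) τ :=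
      hψder.sub hφder
    have hglm : IsLocalMin (fun σ => ψ σ - φ σ) τ := by
      have hval : ψ τ - φ τ = 0 := by simp [hψ_def, hφ_def]
      rw [IsLocalMin, IsMinFilter]
      filter_upwards [hmemIoo] with σ hσ
      rw [hval]
      have h1 := hle σ hσ
      have h2 := hinv σ hσ
      have h3 : φ σ ≤ ψ σ := by rw [hφ_def]; simp only; rw [← h2]; exact h1
      linarith
    have hzero : (‖S (hfun τ)‖ ^ 2 - ‖R (hfun τ)‖ ^ 2) / ‖Qt (hfun τ)‖ ^ 2 - deriv φ τ = 0 :=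
      hglm.hasDerivAt_eq_zero hg
    have hd : deriv φ τ = (‖S (hfun τ)‖ ^ 2 - ‖R (hfun τ)‖ ^ 2) / ‖Qt (hfun τ)‖ ^ 2 := by
      linarith
    rw [← hd]
    exact hφder.congr_of_eventuallyEq heq
  refine ⟨main, ?_⟩
  -- Part 2
  intro τy hτy hmin
  have hmemIoo : Set.Ioo (0 : ℝ) 1 ∈ nhds τy := isOpen_Ioo.mem_nhds hτy
  have hq' : (‖Qt (hfun τy)‖ ^ 2 : ℝ) ≠ 0 := (hq_pos τy hτy).ne'
  have hlam' : lam τy ≠ 0 := (hlam_pos τy hτy).ne'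
  -- derivative of `qh` vanishes at the interior minimizer
  have hqlm : IsLocalMin (fun σ => ‖Qt (hfun σ)‖ ^ 2) τy := by
    rw [IsLocalMin, IsMinFilter]
    filter_upwards [hmemIoo] with σ hσ
    exact hmin σ hσ
  have hq0 : deriv (fun σ => ‖Qt (hfun σ)‖ ^ 2) τy = 0 := hqlm.deriv_eq_zero
  have hqder : HasDerivAt (fun σ => ‖Qt (hfun σ)‖ ^ 2) 0 τy := hq0 ▸ (hdQ τy hτy).hasDerivAt
  -- derivative of `W = qh * (1/lam)`
  have hW : HasDerivAt (fun σ => ‖Qt (hfun σ)‖ ^ 2 * (1 / lam σ))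
      (‖S (hfun τy)‖ ^ 2 - ‖R (hfun τy)‖ ^ 2) τy := by
    have h1 := hqder.mul (main τy hτy)
    refine h1.congr_deriv ?_
    rw [zero_mul, zero_add, mul_div_assoc', mul_div_right_comm, div_self hq', one_mul]
  -- the affine comparison function
  set A : ℝ → ℝ := fun σ => (1 - σ) * ‖R (fτ τy)‖ ^ 2 + σ * ‖S (fτ τy)‖ ^ 2 with hA_def
  have hAder : HasDerivAt A (‖S (fτ τy)‖ ^ 2 - ‖R (fτ τy)‖ ^ 2) τy := by
    have h2 := (((hasDerivAt_id τy).const_sub 1).mul_const (‖R (fτ τy)‖ ^ 2)).add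
      ((hasDerivAt_id τy).mul_const (‖S (fτ τy)‖ ^ 2))
    refine h2.congr_deriv ?_
    ring
  have hg2 : HasDerivAt (fun σ => A σ - (1 - ‖Qt (hfun σ)‖ ^ 2 * (1 / lam σ)))
      ((‖S (fτ τy)‖ ^ 2 - ‖R (fτ τy)‖ ^ 2) + (‖S (hfun τy)‖ ^ 2 - ‖R (hfun τy)‖ ^ 2)) τy := by
    have h3 := hAder.sub ((hasDerivAt_const τy (1:ℝ)).sub hW)
    refine h3.congr_deriv ?_
    ring
  have hWval : ∀ σ ∈ Set.Ioo (0 : ℝ) 1,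
      ‖Qt (hfun σ)‖ ^ 2 * (1 / lam σ) =
        (1 - σ) * ‖R (hfun σ)‖ ^ 2 + σ * ‖S (hfun σ)‖ ^ 2 := by
    intro σ hσ
    rw [hinv σ hσ, mul_comm, div_mul_cancel₀ _ (hq_pos σ hσ).ne']
  have hg2lm : IsLocalMin (fun σ => A σ - (1 - ‖Qt (hfun σ)‖ ^ 2 * (1 / lam σ))) τy := by
    have hval : A τy - (1 - ‖Qt (hfun τy)‖ ^ 2 * (1 / lam τy)) = 0 := by
      rw [hWval τy hτy, hnorm τy hτy, hA_def]
      ring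
    rw [IsLocalMin, IsMinFilter]
    filter_upwards [hmemIoo] with σ hσ
    rw [hval, hWval σ hσ]
    have h1 := (hfτ σ hσ).2 (fτ τy) (hfτ τy hτy).1
    have h2 := hnorm σ hσ
    rw [hA_def]
    simp only
    linarith
  have hkey : (‖S (fτ τy)‖ ^ 2 - ‖R (fτ τy)‖ ^ 2) +
      (‖S (hfun τy)‖ ^ 2 - ‖R (hfun τy)‖ ^ 2) = 0 :=
    hg2lm.hasDerivAt_eq_zero hg2
  -- conclude
  have hb : ‖S (fτ τy)‖ ^ 2 + ‖S (hfun τy)‖ ^ 2 =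
      ‖R (fτ τy)‖ ^ 2 + ‖R (hfun τy)‖ ^ 2 := by linarith
  have hn := hnorm τy hτy
  constructor
  · linear_combination hn - τy * hb
  · linear_combination hn - τy * hb + hb
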